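/- There exists no d-point 4-design in the probability simplex Δ_d: any set of N probability vectors p^{(1)},…,p^{(N)} ∈ Δ_d whose fourth moments match those of the uniform measure on Δ_d (i.e., (1/N)∑_i p^{(i)}_α p^{(i)}_β p^{(i)}_μ p^{(i)}_ν = ⟨p_α p_β p_μ p_ν⟩_{Δ_d} for all indices) must satisfy N ≥ d(d+1)/2 > d (for d ≥ 2). -/
import Mathlib

open Finset

/-- Average of the monomial `p_α p_β p_μ p_ν` over the probability simplex `Δ_d`
with respect to the flat Lebesgue measure:
`⟨∏ p_γ^{κ_γ}⟩ = (d−1)!·∏ κ_γ! / (d+3)!`, where `κ_γ` is the multiplicity of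
`γ` among `(α, β, μ, ν)`. -/
noncomputable def simplexFourthMoment (d : ℕ) (α β μ ν : Fin d) : ℝ :=
  ((d - 1).factorial *
      ∏ γ : Fin d, (({α, β, μ, ν} : Multiset (Fin d)).count γ).factorial : ℝ)
    / (d + 3).factorial

namespace NoFourDesignAux

variable {d : ℕ}

lemma prod_count_cons (a : Fin d) (m : Multiset (Fin d)) :
    ∏ γ : Fin d, ((a ::ₘ m).count γ).factorial
      = (m.count a + 1) * ∏ γ : Fin d, (m.count γ).factorial := by
  rw [← Finset.mul_prod_erase Finset.univ (fun γ => ((a ::ₘ m).count γ).factorial)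
        (Finset.mem_univ a),
      ← Finset.mul_prod_erase Finset.univ (fun γ => (m.count γ).factorial) (Finset.mem_univ a)]
  rw [Multiset.count_cons_self, Nat.factorial_succ, mul_assoc]
  congr 1
  congr 1
  apply Finset.prod_congr rfl
  intro γ hγ
  rw [Multiset.count_cons_of_ne (Finset.ne_of_mem_erase hγ)]

lemma prod_count_four (α β μ ν : Fin d) :
    ∏ γ : Fin d, (({α, β, μ, ν} : Multiset (Fin d)).count γ).factorial
      = ((if α = β then 1 else 0) + (if α = μ then 1 else 0) + (if α = ν then 1 else 0) + 1)
        * (((if β = μ then 1 else 0) + (if β = ν then 1 else 0) + 1)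
        * ((if μ = ν then 1 else 0) + 1)) := by
  have h4 : ∏ γ : Fin d, (({ν} : Multiset (Fin d)).count γ).factorial = 1 := by
    apply Finset.prod_eq_one
    intro γ _
    rw [Multiset.count_singleton]
    split <;> rfl
  show ∏ γ : Fin d, ((α ::ₘ β ::ₘ μ ::ₘ {ν}).count γ).factorial = _
  rw [prod_count_cons, prod_count_cons, prod_count_cons, h4, mul_one]
  simp [Multiset.count_cons, Multiset.count_singleton]
  ring

lemma moment_eq (α β μ ν : Fin d) :
    simplexFourthMoment d α β μ ν =
      ((d - 1).factorial : ℝ) / (d + 3).factorial *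
        (((if α = β then (1:ℝ) else 0) + (if α = μ then 1 else 0) + (if α = ν then 1 else 0) + 1)
          * (((if β = μ then (1:ℝ) else 0) + (if β = ν then 1 else 0) + 1)
          * ((if μ = ν then (1:ℝ) else 0) + 1))) := by
  unfold simplexFourthMoment
  rw [prod_count_four]
  push_cast [apply_ite (Nat.cast : ℕ → ℝ)]
  ring

lemma E3 (Q : Fin d → Fin d → ℝ) :
    ∑ x : Fin d, ∑ y : Fin d, Q x y * Q y y = ∑ a : Fin d, (∑ b, Q b a) * Q a a := by
  rw [Finset.sum_comm]; exact Finset.sum_congr rfl fun a _ => by rw [Finset.sum_mul]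

lemma E4 (Q : Fin d → Fin d → ℝ) :
    ∑ x : Fin d, ∑ y : Fin d, Q x x * Q y y
      = (∑ a : Fin d, Q a a) * (∑ a : Fin d, Q a a) := by
  rw [Finset.sum_mul]; exact Finset.sum_congr rfl fun a _ => by rw [Finset.mul_sum]

lemma E5 (Q : Fin d → Fin d → ℝ) :
    ∑ x : Fin d, ∑ y : Fin d, Q x y * Q x x = ∑ a : Fin d, (∑ b, Q a b) * Q a a := by
  exact Finset.sum_congr rfl fun a _ => by rw [Finset.sum_mul]

lemma E6 (Q : Fin d → Fin d → ℝ) :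
    ∑ x : Fin d, ∑ y : Fin d, ∑ z : Fin d, Q x y * Q z z
      = (∑ a : Fin d, ∑ b : Fin d, Q a b) * (∑ a : Fin d, Q a a) := by
  rw [Finset.sum_mul]
  exact Finset.sum_congr rfl fun a _ => by
    rw [Finset.sum_mul]; exact Finset.sum_congr rfl fun b _ => by rw [Finset.mul_sum]

lemma E7 (Q : Fin d → Fin d → ℝ) :
    ∑ x : Fin d, ∑ y : Fin d, Q x x * Q x y = ∑ a : Fin d, (∑ b, Q a b) * Q a a := by
  exact Finset.sum_congr rfl fun a _ => by
    rw [Finset.sum_mul]; exact Finset.sum_congr rfl fun b _ => mul_comm _ _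

lemma E9 (Q : Fin d → Fin d → ℝ) :
    ∑ x : Fin d, ∑ y : Fin d, ∑ z : Fin d, Q x y * Q y z
      = ∑ a : Fin d, (∑ b, Q a b) * (∑ b, Q b a) := by
  rw [Finset.sum_comm]
  exact Finset.sum_congr rfl fun a _ => by
    rw [mul_comm, Finset.sum_mul]
    exact Finset.sum_congr rfl fun b _ => by rw [Finset.mul_sum]

lemma E10 (Q : Fin d → Fin d → ℝ) :
    ∑ x : Fin d, ∑ y : Fin d, Q x x * Q y x = ∑ a : Fin d, (∑ b, Q b a) * Q a a := by
  exact Finset.sum_congr rfl fun a _ => by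
    rw [Finset.sum_mul]; exact Finset.sum_congr rfl fun b _ => mul_comm _ _

lemma E12 (Q : Fin d → Fin d → ℝ) :
    ∑ x : Fin d, ∑ y : Fin d, ∑ z : Fin d, Q x y * Q z y
      = ∑ a : Fin d, (∑ b, Q b a) * (∑ b, Q b a) := by
  rw [Finset.sum_comm]
  exact Finset.sum_congr rfl fun a _ => by
    rw [Finset.sum_mul]
    exact Finset.sum_congr rfl fun b _ => by rw [Finset.mul_sum]

lemma E13 (Q : Fin d → Fin d → ℝ) :
    ∑ x : Fin d, ∑ y : Fin d, ∑ z : Fin d, Q x x * Q y z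
      = (∑ a : Fin d, Q a a) * (∑ a : Fin d, ∑ b : Fin d, Q a b) := by
  rw [Finset.sum_mul]
  exact Finset.sum_congr rfl fun a _ => by
    rw [Finset.mul_sum]; exact Finset.sum_congr rfl fun b _ => by rw [Finset.mul_sum]

lemma E14 (Q : Fin d → Fin d → ℝ) :
    ∑ x : Fin d, ∑ y : Fin d, ∑ z : Fin d, Q x y * Q x z
      = ∑ a : Fin d, (∑ b, Q a b) * (∑ b, Q a b) := by
  exact Finset.sum_congr rfl fun a _ => by
    rw [Finset.sum_mul]
    exact Finset.sum_congr rfl fun b _ => by rw [Finset.mul_sum]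

lemma E15 (Q : Fin d → Fin d → ℝ) :
    ∑ x : Fin d, ∑ y : Fin d, ∑ z : Fin d, Q x y * Q z x
      = ∑ a : Fin d, (∑ b, Q a b) * (∑ b, Q b a) := by
  exact Finset.sum_congr rfl fun a _ => by
    rw [Finset.sum_mul]
    exact Finset.sum_congr rfl fun b _ => by rw [Finset.mul_sum]

lemma E16 (Q : Fin d → Fin d → ℝ) :
    ∑ x : Fin d, ∑ y : Fin d, ∑ z : Fin d, ∑ w : Fin d, Q x y * Q z w
      = (∑ a : Fin d, ∑ b : Fin d, Q a b) * (∑ a : Fin d, ∑ b : Fin d, Q a b) := by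
  rw [Finset.sum_mul]
  exact Finset.sum_congr rfl fun a _ => by
    rw [Finset.sum_mul]
    exact Finset.sum_congr rfl fun b _ => by
      rw [Finset.mul_sum]
      exact Finset.sum_congr rfl fun c _ => by rw [Finset.mul_sum]

lemma hsq (Q : Fin d → Fin d → ℝ) :
    (∑ a : Fin d, ((∑ b, Q a b) + (∑ b, Q b a) + 2*Q a a)
        * ((∑ b, Q a b) + (∑ b, Q b a) + 2*Q a a))
      = ∑ a : Fin d, (∑ b, Q a b)*(∑ b, Q a b) + ∑ a : Fin d, (∑ b, Q b a)*(∑ b, Q b a)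
        + 2*∑ a : Fin d, (∑ b, Q a b)*(∑ b, Q b a) + 4*∑ a : Fin d, (∑ b, Q a b)*Q a a
        + 4*∑ a : Fin d, (∑ b, Q b a)*Q a a + 4*∑ a : Fin d, Q a a * Q a a := by
  rw [Finset.mul_sum, Finset.mul_sum, Finset.mul_sum, Finset.mul_sum,
    ← Finset.sum_add_distrib, ← Finset.sum_add_distrib, ← Finset.sum_add_distrib,
    ← Finset.sum_add_distrib, ← Finset.sum_add_distrib]
  exact Finset.sum_congr rfl fun a _ => by ring

/-- The key positive-definiteness identity for the fourth-moment quadratic form. -/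
lemma big (Q : Fin d → Fin d → ℝ) :
    ∑ α : Fin d, ∑ β : Fin d, ∑ μ : Fin d, ∑ ν : Fin d,
      Q α β * Q μ ν *
        (((if α = β then (1:ℝ) else 0) + (if α = μ then 1 else 0) + (if α = ν then 1 else 0) + 1)
          * (((if β = μ then (1:ℝ) else 0) + (if β = ν then 1 else 0) + 1)
          * ((if μ = ν then (1:ℝ) else 0) + 1)))
      = ((∑ a : Fin d, ∑ b : Fin d, Q a b) + ∑ a : Fin d, Q a a)
          * ((∑ a : Fin d, ∑ b : Fin d, Q a b) + ∑ a : Fin d, Q a a)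
        + (∑ a : Fin d, ((∑ b, Q a b) + (∑ b, Q b a) + 2*Q a a)
            * ((∑ b, Q a b) + (∑ b, Q b a) + 2*Q a a))
        + (∑ a : Fin d, ∑ b : Fin d, Q a b * Q a b + ∑ a : Fin d, ∑ b : Fin d, Q a b * Q b a)
        + 2 * ∑ a : Fin d, Q a a * Q a a := by
  rw [hsq]
  simp only [mul_add, add_mul, mul_ite, ite_mul, mul_one, one_mul, mul_zero, zero_mul,
    Finset.sum_add_distrib, Finset.sum_ite_irrel, Finset.sum_ite_eq, Finset.sum_ite_eq',
    Finset.mem_univ, if_true, Finset.sum_const_zero]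
  rw [E3, E4, E5, E6, E7, E9, E10, E12, E13, E14, E15, E16]
  ring

/-- Symmetrization of a function on ordered pairs. -/
def symFun (q : {x : Fin d × Fin d // x.1 ≤ x.2} → ℝ) (a b : Fin d) : ℝ :=
  if h : a ≤ b then q ⟨(a, b), h⟩ else q ⟨(b, a), le_of_not_ge h⟩

lemma symFun_add (q r : {x : Fin d × Fin d // x.1 ≤ x.2} → ℝ) (a b : Fin d) :
    symFun (q + r) a b = symFun q a b + symFun r a b := by
  unfold symFun; split <;> simp

lemma symFun_smul (c : ℝ) (q : {x : Fin d × Fin d // x.1 ≤ x.2} → ℝ) (a b : Fin d) :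
    symFun (c • q) a b = c * symFun q a b := by
  unfold symFun; split <;> simp

lemma symFun_symm (q : {x : Fin d × Fin d // x.1 ≤ x.2} → ℝ) (a b : Fin d) :
    symFun q a b = symFun q b a := by
  unfold symFun
  rcases le_or_gt a b with h | h
  · rcases eq_or_lt_of_le h with rfl | hlt
    · simp
    · rw [dif_pos h, dif_neg (not_le.mpr hlt)]
  · rw [dif_neg (not_le.mpr h), dif_pos h.le]

/-- The evaluation map sending a symmetric coefficient vector to the values of the
associated quadratic form at the design points. -/
noncomputable def Phi {N : ℕ} (p : Fin N → Fin d → ℝ) :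
    ({x : Fin d × Fin d // x.1 ≤ x.2} → ℝ) →ₗ[ℝ] (Fin N → ℝ) where
  toFun q i := ∑ a, ∑ b, symFun q a b * p i a * p i b
  map_add' q r := by
    funext i
    simp only [symFun_add, add_mul, Finset.sum_add_distrib, Pi.add_apply]
  map_smul' c q := by
    funext i
    simp only [symFun_smul, smul_eq_mul, Pi.smul_apply, RingHom.id_apply, mul_assoc,
      ← Finset.mul_sum]

lemma card_pairs (d : ℕ) :
    Fintype.card {x : Fin d × Fin d // x.1 ≤ x.2} = d * (d + 1) / 2 := by
  have e : {x : Fin d × Fin d // x.1 ≤ x.2} ≃ Σ b : Fin d, {a : Fin d // a ≤ b} :=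
    { toFun := fun x => ⟨x.1.2, ⟨x.1.1, x.2⟩⟩
      invFun := fun y => ⟨(y.2.1, y.1), y.2.2⟩
      left_inv := fun x => rfl
      right_inv := fun y => rfl }
  rw [Fintype.card_congr e, Fintype.card_sigma]
  have hb : ∀ b : Fin d, Fintype.card {a : Fin d // a ≤ b} = (b : ℕ) + 1 := by
    intro b
    rw [Fintype.card_subtype]
    have : Finset.univ.filter (fun a : Fin d => a ≤ b) = Finset.Iic b := by
      ext a; simp
    rw [this, Fin.card_Iic]
  simp only [hb]
  rw [Fin.sum_univ_eq_sum_range (fun i => i + 1)]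
  have h2 : ∑ i ∈ Finset.range (d + 1), i = (∑ i ∈ Finset.range d, (i + 1)) + 0 :=
    Finset.sum_range_succ' (fun i => i) d
  have h3 := Finset.sum_range_id (d + 1)
  rw [add_zero] at h2
  rw [← h2, h3]
  simp [Nat.mul_comm]

end NoFourDesignAux

open NoFourDesignAux in
/-- no `d`-point 4-design exists in the probability simplex `Δ_d`:
any `N` probability vectors whose fourth moments match those of the uniform
measure on `Δ_d` must satisfy `N ≥ d(d+1)/2 > d` (for `d ≥ 2`). -/
theorem no_d_point_four_design (d N : ℕ) (hd : 2 ≤ d) (hN : 0 < N)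
    (p : Fin N → Fin d → ℝ)
    (hpos : ∀ i α, 0 ≤ p i α) (hsum : ∀ i, ∑ α, p i α = 1)
    (hmom : ∀ α β μ ν : Fin d,
      (1 / (N : ℝ)) * ∑ i : Fin N, p i α * p i β * p i μ * p i ν
        = simplexFourthMoment d α β μ ν) :
    d * (d + 1) / 2 ≤ N ∧ d < d * (d + 1) / 2 := by
  have harith : d < d * (d + 1) / 2 := by
    have h1 : d + 1 ≤ d * (d + 1) / 2 :=
      (Nat.le_div_iff_mul_le two_pos).mpr (by nlinarith)
    omega
  refine ⟨?_, harith⟩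
  rw [← card_pairs d]
  by_contra hlt
  push_neg at hlt
  -- hlt : N < card
  have hninj : ¬ Function.Injective (Phi (d := d) p) := by
    intro hinj
    have h1 := LinearMap.finrank_le_finrank_of_injective hinj
    rw [Module.finrank_fintype_fun_eq_card, Module.finrank_fintype_fun_eq_card,
      Fintype.card_fin] at h1
    omega
  have hker : LinearMap.ker (Phi (d := d) p) ≠ ⊥ := fun h => hninj (LinearMap.ker_eq_bot.mp h)
  obtain ⟨q, hqker, hqne⟩ := (Submodule.ne_bot_iff _).mp hker
  have hq0 : Phi (d := d) p q = 0 := hqker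
  set Q : Fin d → Fin d → ℝ := symFun q with hQdef
  have hg : ∀ i, ∑ a, ∑ b, Q a b * p i a * p i b = 0 := fun i => congrFun hq0 i
  -- find a nonzero entry of Q
  have hQne : ∃ a b, Q a b ≠ 0 := by
    by_contra h
    push_neg at h
    apply hqne
    funext s
    have h1 : Q s.1.1 s.1.2 = q s := by
      rw [hQdef]
      unfold symFun
      rw [dif_pos s.2]
    have := h s.1.1 s.1.2
    rw [h1] at this
    simpa using this
  obtain ⟨a0, b0, hab⟩ := hQne
  -- the fourth-moment quadratic form vanishes on Q
  have expand_g : ∀ i, (∑ a, ∑ b, Q a b * p i a * p i b) * (∑ a, ∑ b, Q a b * p i a * p i b)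
      = ∑ α, ∑ β, ∑ μ, ∑ ν, Q α β * Q μ ν * (p i α * p i β * p i μ * p i ν) := by
    intro i
    rw [Finset.sum_mul]
    refine Finset.sum_congr rfl fun α _ => ?_
    rw [Finset.sum_mul]
    refine Finset.sum_congr rfl fun β _ => ?_
    rw [Finset.mul_sum]
    refine Finset.sum_congr rfl fun μ _ => ?_
    rw [Finset.mul_sum]
    refine Finset.sum_congr rfl fun ν _ => ?_
    ring
  have hF : ∑ α, ∑ β, ∑ μ, ∑ ν, Q α β * Q μ ν * simplexFourthMoment d α β μ ν = 0 := by
    calc ∑ α, ∑ β, ∑ μ, ∑ ν, Q α β * Q μ ν * simplexFourthMoment d α β μ ν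
        = ∑ α, ∑ β, ∑ μ, ∑ ν, Q α β * Q μ ν *
            ((1 / (N : ℝ)) * ∑ i : Fin N, p i α * p i β * p i μ * p i ν) := by
          exact Finset.sum_congr rfl fun α _ => Finset.sum_congr rfl fun β _ =>
            Finset.sum_congr rfl fun μ _ => Finset.sum_congr rfl fun ν _ => by rw [hmom]
      _ = (1 / (N : ℝ)) * ∑ α, ∑ β, ∑ μ, ∑ ν,
            ∑ i : Fin N, Q α β * Q μ ν * (p i α * p i β * p i μ * p i ν) := by
          rw [Finset.mul_sum]
          refine Finset.sum_congr rfl fun α _ => ?_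
          rw [Finset.mul_sum]
          refine Finset.sum_congr rfl fun β _ => ?_
          rw [Finset.mul_sum]
          refine Finset.sum_congr rfl fun μ _ => ?_
          rw [Finset.mul_sum]
          refine Finset.sum_congr rfl fun ν _ => ?_
          rw [← Finset.mul_sum]
          ring
      _ = (1 / (N : ℝ)) * ∑ i : Fin N, ∑ α, ∑ β, ∑ μ, ∑ ν,
            Q α β * Q μ ν * (p i α * p i β * p i μ * p i ν) := by
          congr 1
          calc ∑ α, ∑ β, ∑ μ, ∑ ν, ∑ i : Fin N,
                Q α β * Q μ ν * (p i α * p i β * p i μ * p i ν)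
              = ∑ α, ∑ β, ∑ μ, ∑ i : Fin N, ∑ ν,
                Q α β * Q μ ν * (p i α * p i β * p i μ * p i ν) := by
                exact Finset.sum_congr rfl fun α _ => Finset.sum_congr rfl fun β _ =>
                  Finset.sum_congr rfl fun μ _ => Finset.sum_comm
            _ = ∑ α, ∑ β, ∑ i : Fin N, ∑ μ, ∑ ν,
                Q α β * Q μ ν * (p i α * p i β * p i μ * p i ν) := by
                exact Finset.sum_congr rfl fun α _ => Finset.sum_congr rfl fun β _ =>
                  Finset.sum_comm
            _ = ∑ α, ∑ i : Fin N, ∑ β, ∑ μ, ∑ ν,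
                Q α β * Q μ ν * (p i α * p i β * p i μ * p i ν) := by
                exact Finset.sum_congr rfl fun α _ => Finset.sum_comm
            _ = ∑ i : Fin N, ∑ α, ∑ β, ∑ μ, ∑ ν,
                Q α β * Q μ ν * (p i α * p i β * p i μ * p i ν) := Finset.sum_comm
      _ = (1 / (N : ℝ)) * ∑ i : Fin N, (∑ a, ∑ b, Q a b * p i a * p i b)
            * (∑ a, ∑ b, Q a b * p i a * p i b) := by
          congr 1
          exact Finset.sum_congr rfl fun i _ => (expand_g i).symm
      _ = 0 := by
          simp only [hg, mul_zero, zero_mul, Finset.sum_const_zero]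
  -- rewrite via the explicit formula and the big identity
  have hc : (0 : ℝ) < ((d - 1).factorial : ℝ) / (d + 3).factorial := by positivity
  have hFc : ∑ α, ∑ β, ∑ μ, ∑ ν, Q α β * Q μ ν * simplexFourthMoment d α β μ ν
      = ((d - 1).factorial : ℝ) / (d + 3).factorial *
        ∑ α : Fin d, ∑ β : Fin d, ∑ μ : Fin d, ∑ ν : Fin d,
          Q α β * Q μ ν *
            (((if α = β then (1:ℝ) else 0) + (if α = μ then 1 else 0)
                + (if α = ν then 1 else 0) + 1)
              * (((if β = μ then (1:ℝ) else 0) + (if β = ν then 1 else 0) + 1)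
              * ((if μ = ν then (1:ℝ) else 0) + 1))) := by
    rw [Finset.mul_sum]
    refine Finset.sum_congr rfl fun α _ => ?_
    rw [Finset.mul_sum]
    refine Finset.sum_congr rfl fun β _ => ?_
    rw [Finset.mul_sum]
    refine Finset.sum_congr rfl fun μ _ => ?_
    rw [Finset.mul_sum]
    refine Finset.sum_congr rfl fun ν _ => ?_
    rw [moment_eq]
    ring
  have hBig0 : (((∑ a : Fin d, ∑ b : Fin d, Q a b) + ∑ a : Fin d, Q a a)
          * ((∑ a : Fin d, ∑ b : Fin d, Q a b) + ∑ a : Fin d, Q a a)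
        + (∑ a : Fin d, ((∑ b, Q a b) + (∑ b, Q b a) + 2*Q a a)
            * ((∑ b, Q a b) + (∑ b, Q b a) + 2*Q a a))
        + (∑ a : Fin d, ∑ b : Fin d, Q a b * Q a b + ∑ a : Fin d, ∑ b : Fin d, Q a b * Q b a)
        + 2 * ∑ a : Fin d, Q a a * Q a a) = 0 := by
    have h := hFc
    rw [hF, big] at h
    rcases mul_eq_zero.mp h.symm with h' | h'
    · exact absurd h' (ne_of_gt hc)
    · exact h'
  -- all four summands are nonnegative, and the third is positive: contradiction
  have hQsym : ∀ a b, Q a b = Q b a := fun a b => symFun_symm q a b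
  have hvv' : ∑ a : Fin d, ∑ b : Fin d, Q a b * Q b a
      = ∑ a : Fin d, ∑ b : Fin d, Q a b * Q a b := by
    refine Finset.sum_congr rfl fun a _ => Finset.sum_congr rfl fun b _ => ?_
    rw [← hQsym a b]
  have hvpos : 0 < ∑ a : Fin d, ∑ b : Fin d, Q a b * Q a b := by
    have h1 : Q a0 b0 * Q a0 b0 ≤ ∑ b, Q a0 b * Q a0 b :=
      Finset.single_le_sum (f := fun b => Q a0 b * Q a0 b)
        (fun b _ => mul_self_nonneg _) (Finset.mem_univ b0)
    have h2 : ∑ b, Q a0 b * Q a0 b ≤ ∑ a : Fin d, ∑ b : Fin d, Q a b * Q a b :=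
      Finset.single_le_sum (f := fun a => ∑ b, Q a b * Q a b)
        (fun a _ => Finset.sum_nonneg fun b _ => mul_self_nonneg _) (Finset.mem_univ a0)
    have h3 : 0 < Q a0 b0 * Q a0 b0 := mul_self_pos.mpr hab
    linarith
  have hA : 0 ≤ ((∑ a : Fin d, ∑ b : Fin d, Q a b) + ∑ a : Fin d, Q a a)
      * ((∑ a : Fin d, ∑ b : Fin d, Q a b) + ∑ a : Fin d, Q a a) := mul_self_nonneg _
  have hB : 0 ≤ ∑ a : Fin d, ((∑ b, Q a b) + (∑ b, Q b a) + 2*Q a a)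
      * ((∑ b, Q a b) + (∑ b, Q b a) + 2*Q a a) :=
    Finset.sum_nonneg fun a _ => mul_self_nonneg _
  have hC : 0 ≤ ∑ a : Fin d, Q a a * Q a a :=
    Finset.sum_nonneg fun a _ => mul_self_nonneg _
  rw [hvv'] at hBig0
  linarith
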